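/- Let C ∈ ℍ[t] be of positive degree, M a monic quadratic irreducible real polynomial, and suppose right division of C by M gives remainder R ≠ 0 (so deg R ≤ 1) and M divides C·conj(C). Then M = λ·R·conj(R) for some positive real λ, and R is a common left divisor of both M and C. -/
import Mathlib
open Polynomial
open scoped Quaternion

noncomputable def qconj (P : ℍ[ℝ][X]) : ℍ[ℝ][X] :=
  ∑ i ∈ P.support, Polynomial.C (star (P.coeff i)) * Polynomial.X ^ i

lemma qconj_coeff (P : ℍ[ℝ][X]) (n : ℕ) : (qconj P).coeff n = star (P.coeff n) := by
  rw [qconj, finset_sum_coeff]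
  simp only [coeff_C_mul, coeff_X_pow, mul_ite, mul_one, mul_zero]
  rw [Finset.sum_ite_eq P.support n (fun i => star (P.coeff i))]
  split_ifs with h
  · rfl
  · simp [Polynomial.notMem_support_iff.mp h]

lemma qconj_mul (P Q : ℍ[ℝ][X]) : qconj (P * Q) = qconj Q * qconj P := by
  refine Polynomial.ext fun n => ?_
  simp only [qconj_coeff, coeff_mul]
  rw [star_sum]
  rw [← Finset.Nat.sum_antidiagonal_swap (f := fun p => star (Q.coeff p.1) * star (P.coeff p.2))]
  simp [star_mul]

lemma qconj_add (P Q : ℍ[ℝ][X]) : qconj (P + Q) = qconj P + qconj Q := by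
  refine Polynomial.ext fun n => ?_
  simp [qconj_coeff, star_add]

lemma qconj_qconj (P : ℍ[ℝ][X]) : qconj (qconj P) = P :=
  Polynomial.ext fun n => by simp [qconj_coeff]

lemma qconj_eq_zero {P : ℍ[ℝ][X]} : qconj P = 0 ↔ P = 0 := by
  constructor
  · intro h; rw [← qconj_qconj P, h]; exact Polynomial.ext fun n => by simp [qconj_coeff]
  · rintro rfl; exact Polynomial.ext fun n => by simp [qconj_coeff]

lemma qconj_support (P : ℍ[ℝ][X]) : (qconj P).support = P.support := by
  ext n; simp [mem_support_iff, qconj_coeff]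

lemma qconj_degree (P : ℍ[ℝ][X]) : (qconj P).degree = P.degree := by
  unfold Polynomial.degree
  rw [qconj_support]

lemma qconj_map (m : ℝ[X]) : qconj (m.map (algebraMap ℝ ℍ[ℝ])) = m.map (algebraMap ℝ ℍ[ℝ]) := by
  refine Polynomial.ext fun n => ?_
  simp [qconj_coeff, coeff_map, Quaternion.algebraMap_def, Quaternion.star_coe]

lemma C_real_comm (r : ℝ) (p : ℍ[ℝ][X]) :
    Polynomial.C (r : ℍ[ℝ]) * p = p * Polynomial.C (r : ℍ[ℝ]) := by
  refine Polynomial.ext fun n => ?_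
  simp [coeff_C_mul, coeff_mul_C, Quaternion.coe_commutes]

lemma map_comm (m : ℝ[X]) (p : ℍ[ℝ][X]) :
    m.map (algebraMap ℝ ℍ[ℝ]) * p = p * m.map (algebraMap ℝ ℍ[ℝ]) := by
  induction m using Polynomial.induction_on' with
  | add f g hf hg => rw [Polynomial.map_add, add_mul, mul_add, hf, hg]
  | monomial k r =>
      rw [Polynomial.map_monomial, ← Polynomial.C_mul_X_pow_eq_monomial,
        show (algebraMap ℝ ℍ[ℝ]) r = (r : ℍ[ℝ]) from rfl]
      rw [mul_assoc, X_pow_mul, ← mul_assoc, C_real_comm, mul_assoc]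

/-- If right division of `C` by a monic quadratic irreducible real polynomial `M`
dividing `C ⬝ conj C` leaves a nonzero remainder `R`, then `M` is a positive real
multiple of `R ⬝ conj R` and `R` is a common left divisor of `M` and `C`. -/
theorem remainder_left_divides (C : ℍ[ℝ][X]) (M : ℝ[X]) (Q R : ℍ[ℝ][X])
    (hC : 0 < C.degree)
    (hM : M.Monic) (hdeg : M.degree = 2) (hirr : Irreducible M)
    (hdivision : C = M.map (algebraMap ℝ ℍ[ℝ]) * Q + R)
    (hR : R ≠ 0) (hRdeg : R.degree ≤ 1)
    (hdvd : M.map (algebraMap ℝ ℍ[ℝ]) ∣ C * qconj C) :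
    ∃ lam : ℝ, 0 < lam ∧
      M.map (algebraMap ℝ ℍ[ℝ]) =
        Polynomial.C (algebraMap ℝ ℍ[ℝ] lam) * (R * qconj R) ∧
      R ∣ M.map (algebraMap ℝ ℍ[ℝ]) ∧ R ∣ C := by
  have hmonic : (M.map (algebraMap ℝ ℍ[ℝ])).Monic := hM.map _
  have hmdeg : (M.map (algebraMap ℝ ℍ[ℝ])).degree = 2 := by
    rw [degree_map_eq_of_injective Quaternion.algebraMap_injective, hdeg]
  have hq0 : qconj R ≠ 0 := fun h => hR (qconj_eq_zero.mp h)
  -- Step A : M | R * qconj R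
  obtain ⟨W, hW⟩ := hdvd
  have keyid : R * qconj R = C * qconj C -
      (M.map (algebraMap ℝ ℍ[ℝ]) * Q * (qconj Q * M.map (algebraMap ℝ ℍ[ℝ]) + qconj R)
        + R * (qconj Q * M.map (algebraMap ℝ ℍ[ℝ]))) := by
    rw [hdivision, qconj_add, qconj_mul, qconj_map]
    noncomm_ring
  have hdvdRR : M.map (algebraMap ℝ ℍ[ℝ]) ∣ R * qconj R := by
    rw [keyid, hW]
    refine dvd_sub ⟨W, rfl⟩ (dvd_add ⟨Q * (qconj Q * M.map (algebraMap ℝ ℍ[ℝ]) + qconj R),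
      by rw [mul_assoc]⟩ ⟨R * qconj Q, by rw [map_comm, ← mul_assoc]⟩)
  obtain ⟨S, hS⟩ := hdvdRR
  have hRR0 : R * qconj R ≠ 0 := mul_ne_zero hR hq0
  have hS0 : S ≠ 0 := fun h => hRR0 (by rw [hS, h, mul_zero])
  -- S is a constant
  have hdegS : S.natDegree = 0 := by
    have h1 : (R * qconj R).degree ≤ 2 := by
      rw [degree_mul, qconj_degree]
      calc R.degree + R.degree ≤ 1 + 1 := add_le_add hRdeg hRdeg
        _ = 2 := by rfl
    rw [hS, degree_mul, hmdeg, degree_eq_natDegree hS0] at h1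
    norm_cast at h1
    omega
  have hSC : S = Polynomial.C (S.coeff 0) := eq_C_of_natDegree_le_zero hdegS.le
  rw [hSC] at hS
  -- leading coefficients
  have hr0 : R.leadingCoeff ≠ 0 := leadingCoeff_ne_zero.mpr hR
  have hndq : (qconj R).natDegree = R.natDegree := by
    unfold Polynomial.natDegree
    rw [qconj_degree]
  have hlq : (qconj R).leadingCoeff = star R.leadingCoeff := by
    rw [Polynomial.leadingCoeff, hndq, qconj_coeff]; rfl
  have hlc : R.leadingCoeff * star R.leadingCoeff = S.coeff 0 := by
    have h := congrArg Polynomial.leadingCoeff hS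
    rwa [leadingCoeff_mul, leadingCoeff_mul, hlq, hmonic.leadingCoeff, one_mul,
      leadingCoeff_C] at h
  have hn : 0 < Quaternion.normSq R.leadingCoeff := by
    rcases lt_or_eq_of_le (Quaternion.normSq_nonneg (a := R.leadingCoeff)) with h | h
    · exact h
    · exact absurd (Quaternion.normSq_eq_zero.mp h.symm) hr0
  have hs : S.coeff 0 = ((Quaternion.normSq R.leadingCoeff : ℝ) : ℍ[ℝ]) := by
    rw [← hlc, Quaternion.self_mul_star]
  refine ⟨(Quaternion.normSq R.leadingCoeff)⁻¹, inv_pos.mpr hn, ?_, ?_, ?_⟩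
  all_goals {
    have hmain : M.map (algebraMap ℝ ℍ[ℝ]) =
        Polynomial.C (((Quaternion.normSq R.leadingCoeff)⁻¹ : ℝ) : ℍ[ℝ]) * (R * qconj R) := by
      rw [hS, hs, ← mul_assoc, C_real_comm, mul_assoc, ← Polynomial.C_mul,
        ← Quaternion.coe_mul, inv_mul_cancel₀ hn.ne', Quaternion.coe_one, Polynomial.C_1,
        mul_one]
    have hRm : M.map (algebraMap ℝ ℍ[ℝ]) =
        R * (Polynomial.C (((Quaternion.normSq R.leadingCoeff)⁻¹ : ℝ) : ℍ[ℝ]) * qconj R) := by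
      rw [hmain, ← mul_assoc, C_real_comm ((Quaternion.normSq R.leadingCoeff)⁻¹) R, mul_assoc]
    first
    | exact hmain
    | exact ⟨_, hRm⟩
    | exact ⟨(Polynomial.C (((Quaternion.normSq R.leadingCoeff)⁻¹ : ℝ) : ℍ[ℝ]) * qconj R) * Q + 1,
        by rw [hdivision, mul_add, mul_one, ← mul_assoc, ← hRm]⟩
  }
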